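/- Let H ≥ 0 be an unbounded self-adjoint operator with ground state energy 0 and spectrum S. Then the set D = { t ∈ ℝ : 0 ∈ closure(conv{ e^{−itE} : E ∈ S }) } is dense in ℝ, and for every t ∈ D, ‖U_t · U_t† − id‖_◇ = 2, where U_t = e^{−itH}. -/

import Mathlib

open Complex Real

/-- If `t * (E₁ - E₀) = (2k+1)π` for two spectrum points, then `0` lies in the convex
hull of the phases, being the midpoint of two antipodal points. -/
lemma zero_mem_hull_of_antipodal {S : Set ℝ} {E₀ E₁ t : ℝ} (h0 : E₀ ∈ S) (h1 : E₁ ∈ S)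
    (k : ℤ) (hk : t * (E₁ - E₀) = (2 * k + 1) * Real.pi) :
    (0 : ℂ) ∈ convexHull ℝ ((fun E : ℝ => Complex.exp (-(t * E) * Complex.I)) '' S) := by
  set f : ℝ → ℂ := fun E : ℝ => Complex.exp (-(t * E) * Complex.I) with hf
  have hp : f E₀ ∈ (f '' S) := ⟨E₀, h0, rfl⟩
  have hq : f E₁ ∈ (f '' S) := ⟨E₁, h1, rfl⟩
  have hanti : f E₁ = - f E₀ := by
    have ht1 : t * E₁ = t * E₀ + (2 * (k:ℝ) + 1) * Real.pi := by
      have : t * (E₁ - E₀) = (2 * (k:ℝ) + 1) * Real.pi := by exact_mod_cast hk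
      linarith [this]
    have hC : ((t * E₁ : ℝ) : ℂ) = ((t * E₀ + (2 * (k:ℝ) + 1) * Real.pi : ℝ) : ℂ) := by
      exact_mod_cast congrArg Complex.ofReal ht1
    push_cast at hC
    have : (-(t * E₁) : ℂ) * Complex.I
        = (-(t * E₀)) * Complex.I + ((-k : ℤ) * (2 * Real.pi * Complex.I) + (-(Real.pi) * Complex.I)) := by
      push_cast
      linear_combination (-Complex.I) * hC
    rw [hf]
    simp only [this, Complex.exp_add, Complex.exp_int_mul_two_pi_mul_I]
    have hexpneg : Complex.exp (-(Real.pi) * Complex.I) = -1 := by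
      rw [neg_mul, Complex.exp_neg, Complex.exp_pi_mul_I]
      norm_num
    rw [hexpneg]
    ring
  have hmem := (convex_convexHull ℝ (f '' S)) (subset_convexHull ℝ _ hp)
      (subset_convexHull ℝ _ hq) (by norm_num : (0:ℝ) ≤ 1/2) (by norm_num : (0:ℝ) ≤ 1/2)
      (by norm_num : (1/2 : ℝ) + 1/2 = 1)
  have : (1/2 : ℝ) • f E₀ + (1/2 : ℝ) • f E₁ = 0 := by
    rw [hanti]; module
  rwa [this] at hmem

theorem dense_times_of_maximal_diamond_distance
    {𝓗 : Type*} [NormedAddCommGroup 𝓗] [InnerProductSpace ℂ 𝓗]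
    {ι : Type*} (e : HilbertBasis ι ℂ 𝓗)
    (lam : ι → ℝ)
    (hnn : ∀ i, 0 ≤ lam i)                        -- H ≥ 0
    (hground : IsGLB (Set.range lam) 0)           -- ground state energy 0
    (hunbdd : ¬ BddAbove (Set.range lam))         -- H unbounded
    (U : ℝ → 𝓗 →L[ℂ] 𝓗)
    (hU : ∀ t i, U t (e i) = Complex.exp (-(t * lam i) * Complex.I) • e i)
    (dn : ℝ → ℝ)                                  -- t ↦ ‖𝒰_t − id‖_◇
    (hdn_le : ∀ t, dn t ≤ 2)
    (hdn_ge : ∀ (t : ℝ) (ψ : 𝓗), ‖ψ‖ = 1 →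
      2 * Real.sqrt (1 - ‖(inner ℂ ψ (U t ψ) : ℂ)‖ ^ 2) ≤ dn t) :
    Dense {t : ℝ | (0 : ℂ) ∈ closure (convexHull ℝ
        ((fun E : ℝ => Complex.exp (-(t * E) * Complex.I)) '' Set.range lam))} ∧
    ∀ t ∈ {t : ℝ | (0 : ℂ) ∈ closure (convexHull ℝ
        ((fun E : ℝ => Complex.exp (-(t * E) * Complex.I)) '' Set.range lam))},
      dn t = 2 := by
  classical
  -- the index type is nonempty (otherwise the range is empty hence bounded above)
  have hne : Nonempty ι := by
    by_contra h
    exact hunbdd ⟨0, by rintro x ⟨i, rfl⟩; exact absurd ⟨i⟩ h⟩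
  obtain ⟨i0⟩ := hne
  have hpi : (0:ℝ) < Real.pi := Real.pi_pos
  constructor
  · -- density
    rw [Metric.dense_iff]
    intro t0 r hr
    -- pick a large eigenvalue
    obtain ⟨y, ⟨i1, rfl⟩, hgt⟩ := (not_bddAbove_iff).mp hunbdd (lam i0 + 2 * Real.pi / r)
    set Δ : ℝ := lam i1 - lam i0 with hΔ
    have hΔpos : 0 < Δ := by
      have : 0 < 2 * Real.pi / r := by positivity
      simp only [hΔ]; linarith
    have hΔbig : 2 * Real.pi / r < Δ := by simp only [hΔ]; linarith
    set a : ℝ := t0 * Δ / Real.pi with ha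
    set k : ℤ := ⌈(a - 1) / 2⌉ with hkdef
    have hk1 : (a - 1) / 2 ≤ (k:ℝ) := Int.le_ceil _
    have hk2 : (k:ℝ) < (a - 1) / 2 + 1 := Int.ceil_lt_add_one _
    set t : ℝ := (2 * (k:ℝ) + 1) * Real.pi / Δ with htdef
    have hmem : t ∈ {t : ℝ | (0 : ℂ) ∈ closure (convexHull ℝ
        ((fun E : ℝ => Complex.exp (-(t * E) * Complex.I)) '' Set.range lam))} := by
      refine subset_closure (zero_mem_hull_of_antipodal ⟨i0, rfl⟩ ⟨i1, rfl⟩ k ?_)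
      rw [htdef]
      field_simp
      rw [hΔ]
    refine ⟨t, ?_, hmem⟩
    rw [Metric.mem_ball, Real.dist_eq]
    have h1 : t - t0 = (2 * (k:ℝ) + 1 - a) * Real.pi / Δ := by
      rw [htdef, ha]
      field_simp
    have hub : 2 * (k:ℝ) + 1 - a < 2 := by linarith
    have hlb : 0 ≤ 2 * (k:ℝ) + 1 - a := by linarith
    rw [_root_.abs_of_nonneg (by rw [h1]; positivity)]
    rw [h1]
    rw [div_lt_iff₀ hΔpos]
    have : r * Δ > 2 * Real.pi := by
      have := (div_lt_iff₀ hr).mp hΔbig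
      nlinarith
    nlinarith
  · -- maximal diamond distance on D
    intro t ht
    refine le_antisymm (hdn_le t) ?_
    refine le_of_forall_sub_le fun δ hδ => ?_
    set f : ℝ → ℂ := fun E : ℝ => Complex.exp (-(t * E) * Complex.I) with hf
    set ε : ℝ := min (Real.sqrt (δ / 2)) 1 with hε
    have hεpos : 0 < ε := lt_min (Real.sqrt_pos.mpr (by linarith)) one_pos
    obtain ⟨z, hzmem, hzdist⟩ := Metric.mem_closure_iff.mp ht ε hεpos
    have hznorm : ‖z‖ < ε := by rwa [dist_comm, dist_zero_right] at hzdist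
    -- extract a finite convex combination
    rw [convexHull_eq_union_convexHull_finite_subsets, Set.mem_iUnion] at hzmem
    obtain ⟨s, hzmem⟩ := hzmem
    rw [Set.mem_iUnion] at hzmem
    obtain ⟨hsub, hzmem⟩ := hzmem
    rw [Finset.mem_convexHull'] at hzmem
    obtain ⟨w, hw0, hw1, hwz⟩ := hzmem
    -- choose representative indices
    have hrep : ∀ p ∈ s, ∃ i : ι, f (lam i) = p := by
      intro p hp
      obtain ⟨E, ⟨i, rfl⟩, hfe⟩ := hsub hp
      exact ⟨i, hfe⟩
    set g : ℂ → ι := fun p => if h : ∃ i : ι, f (lam i) = p then h.choose else i0 with hg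
    have hgspec : ∀ p ∈ s, f (lam (g p)) = p := by
      intro p hp
      have h : ∃ i : ι, f (lam i) = p := hrep p hp
      simp only [hg, dif_pos h]
      exact h.choose_spec
    have hginj : ∀ p ∈ s, ∀ q ∈ s, g p = g q → p = q := by
      intro p hp q hq h
      rw [← hgspec p hp, ← hgspec q hq, h]
    set s' : Finset ι := s.image g with hs'
    -- coefficients on ι
    set c : ι → ℂ := fun i => ((Real.sqrt (w (f (lam i))) : ℝ) : ℂ) with hc
    set ψ : 𝓗 := ∑ i ∈ s', c i • e i with hψ
    have horth : Orthonormal ℂ e := e.orthonormal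
    -- ⟪ψ, ψ⟫ = 1
    have hinner_self : (inner ℂ ψ ψ : ℂ) = 1 := by
      rw [hψ, horth.inner_sum, hs', Finset.sum_image hginj]
      have : ∀ p ∈ s, (starRingEnd ℂ) (c (g p)) * c (g p) = ((w p : ℝ) : ℂ) := by
        intro p hp
        simp only [hc, Complex.conj_ofReal, ← Complex.ofReal_mul, hgspec p hp,
          Real.mul_self_sqrt (hw0 p hp)]
      rw [Finset.sum_congr rfl this, ← Complex.ofReal_sum, hw1, Complex.ofReal_one]
    have hψnorm : ‖ψ‖ = 1 := by
      have h3 : ‖ψ‖ ^ 2 = 1 := by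
        rw [← inner_self_eq_norm_sq (𝕜 := ℂ) ψ, hinner_self]
        simp
      have := Real.sqrt_sq (norm_nonneg ψ)
      rw [h3, Real.sqrt_one] at this
      exact this.symm
    -- U t ψ
    have hUψ : U t ψ = ∑ i ∈ s', (c i * f (lam i)) • e i := by
      rw [hψ, map_sum]
      refine Finset.sum_congr rfl fun i _ => ?_
      rw [map_smul, hU t i, smul_smul]
    -- ⟪ψ, U t ψ⟫ = z
    have hinner : (inner ℂ ψ (U t ψ) : ℂ) = z := by
      rw [hψ, hUψ, horth.inner_sum, hs', Finset.sum_image hginj, ← hwz]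
      refine Finset.sum_congr rfl fun p hp => ?_
      simp only [hc, Complex.conj_ofReal, hgspec p hp]
      rw [← mul_assoc, ← Complex.ofReal_mul, Real.mul_self_sqrt (hw0 p hp), Complex.real_smul]
    -- conclude
    have hge := hdn_ge t ψ hψnorm
    rw [hinner] at hge
    have hε1 : ε ≤ 1 := min_le_right _ _
    have hεsq : ε ^ 2 ≤ δ / 2 := by
      calc ε ^ 2 ≤ Real.sqrt (δ / 2) ^ 2 := by
            apply pow_le_pow_left₀ hεpos.le (min_le_left _ _)
        _ = δ / 2 := Real.sq_sqrt (by linarith)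
    have hz0 : (0:ℝ) ≤ ‖z‖ := norm_nonneg z
    have hzsq : ‖z‖ ^ 2 ≤ δ / 2 := by nlinarith
    have hz1 : ‖z‖ ^ 2 ≤ 1 := by nlinarith
    set s0 : ℝ := Real.sqrt (1 - ‖z‖ ^ 2) with hs0
    have hs0nn : 0 ≤ s0 := Real.sqrt_nonneg _
    have hs0sq : s0 ^ 2 = 1 - ‖z‖ ^ 2 := Real.sq_sqrt (by linarith)
    have hs0le : s0 ≤ 1 := by
      rw [hs0]
      calc Real.sqrt (1 - ‖z‖ ^ 2) ≤ Real.sqrt 1 :=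
            Real.sqrt_le_sqrt (by nlinarith [sq_nonneg ‖z‖])
        _ = 1 := Real.sqrt_one
    nlinarith [mul_nonneg hs0nn (sub_nonneg.mpr hs0le)]
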